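/- Let Λ be a real p×d matrix with full rank d, and let ρ, ν, α > 0. Let μ be the Gamma distribution on (0,∞) with shape ν + d/2 and rate β = 1/(2 det(ΛᵀΛ)^{1/d} α²), i.e., with density (β^{ν+d/2}/Γ(ν+d/2)) w^{ν+d/2−1} e^{−βw}. Set h(0) = (2π)^{−d/2} det(ΛᵀΛ)^{1/2} ∫₀^∞ w^{−d/2} dμ(w). Then for every x ∈ ℝ^d, (ρ/h(0)) ∫₀^∞ exp(−2π² w · xᵀ(ΛᵀΛ)^{−1}x) dμ(w) = ρ · (Γ(ν+d/2)/Γ(ν)) · (2√π α)^d · (1 + 4π² α² det(ΛᵀΛ)^{1/d} · xᵀ(ΛᵀΛ)^{−1}x)^{−(ν+d/2)}. -/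

import Mathlib

open MeasureTheory Matrix Real ProbabilityTheory Set
open scoped ENNReal NNReal

lemma gamma_moment (a r s c : ℝ) (ha : 0 < a) (hr : 0 < r) (has : 0 < a + s) (hc : 0 ≤ c) :
    ∫ w, w ^ s * Real.exp (-(c * w)) ∂(gammaMeasure a r)
      = r ^ a * Real.Gamma (a + s) / (Real.Gamma a * (r + c) ^ (a + s)) := by
  have hrc : 0 < r + c := by linarith
  have hmeas : Measurable fun w : ℝ => (gammaPDFReal a r w).toNNReal :=
    (measurable_gammaPDFReal a r).real_toNNReal
  have hgm : gammaMeasure a r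
      = volume.withDensity (fun w => ((gammaPDFReal a r w).toNNReal : ℝ≥0∞)) := rfl
  rw [hgm, integral_withDensity_eq_integral_smul hmeas]
  have hae : (fun w : ℝ => (gammaPDFReal a r w).toNNReal • (w ^ s * Real.exp (-(c * w))))
      =ᵐ[volume] Set.indicator (Ioi 0)
        (fun w => r ^ a / Real.Gamma a * (w ^ (a + s - 1) * Real.exp (-((r + c) * w)))) := by
    have h0 : ∀ᵐ w : ℝ, w ≠ 0 := by
      simp [ae_iff]
    filter_upwards [h0] with w hw
    rcases lt_or_gt_of_ne hw with hneg | hpos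
    · rw [Set.indicator_of_notMem (by simpa using hneg.le)]
      simp [gammaPDFReal, not_le.mpr hneg]
    · rw [Set.indicator_of_mem (by simpa using hpos)]
      have hpdf : gammaPDFReal a r w
          = r ^ a / Real.Gamma a * w ^ (a - 1) * Real.exp (-(r * w)) := by
        simp [gammaPDFReal, hpos.le]
      rw [NNReal.smul_def, Real.coe_toNNReal _ (by rw [hpdf]; positivity), hpdf, smul_eq_mul,
        show a + s - 1 = (a - 1) + s by ring, Real.rpow_add hpos,
        show -((r + c) * w) = -(r * w) + -(c * w) by ring, Real.exp_add]
      ring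
  rw [integral_congr_ae hae, integral_indicator measurableSet_Ioi, integral_const_mul,
    show a + s - 1 = (a + s) - 1 by ring, integral_rpow_mul_exp_neg_mul_Ioi has hrc,
    one_div, Real.inv_rpow hrc.le]
  field_simp

lemma posdef_aux (p d : ℕ) (Λ : Matrix (Fin p) (Fin d) ℝ) (hΛ : Λ.rank = d) :
    (Λᵀ * Λ).PosDef := by
  have hker : ∀ y : Fin d → ℝ, Λ *ᵥ y = 0 → y = 0 := by
    have h1 := LinearMap.finrank_range_add_finrank_ker Λ.mulVecLin
    rw [Module.finrank_fin_fun] at h1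
    have h2 : Module.finrank ℝ (LinearMap.ker Λ.mulVecLin) = 0 := by
      have h3 : Λ.rank = Module.finrank ℝ (LinearMap.range Λ.mulVecLin) := rfl
      rw [← h3, hΛ] at h1
      omega
    intro y hy
    have : y ∈ LinearMap.ker Λ.mulVecLin := by
      simpa [Matrix.mulVecLin_apply] using hy
    rwa [Submodule.finrank_eq_zero.mp h2, Submodule.mem_bot] at this
  refine Matrix.PosDef.of_dotProduct_mulVec_pos
    (by simpa using Matrix.isHermitian_conjTranspose_mul_self Λ) fun y hy => ?_
  have key : star y ⬝ᵥ ((Λᵀ * Λ) *ᵥ y) = (Λ *ᵥ y) ⬝ᵥ (Λ *ᵥ y) := by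
    rw [star_trivial, ← Matrix.mulVec_mulVec, Matrix.dotProduct_mulVec,
      Matrix.vecMul_transpose]
  rw [key]
  have hv : Λ *ᵥ y ≠ 0 := fun h => hy (hker y h)
  exact lt_of_le_of_ne (Finset.sum_nonneg fun i _ => mul_self_nonneg _)
    (fun h => hv (dotProduct_self_eq_zero.mp h.symm))

theorem stmt8 (p d : ℕ) (hd : 1 ≤ d) (hdp : d ≤ p)
    (Λ : Matrix (Fin p) (Fin d) ℝ) (hΛ : Λ.rank = d)
    (ρ ν α : ℝ) (hρ : 0 < ρ) (hν : 0 < ν) (hα : 0 < α)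
    (β : ℝ) (hβ : β = 1 / (2 * (Λᵀ * Λ).det ^ ((1 : ℝ) / d) * α ^ 2))
    (μ : Measure ℝ) (hμ : μ = gammaMeasure (ν + d / 2) β)
    (h0 : ℝ)
    (hh0 : h0 = (2 * π) ^ (-(d : ℝ) / 2) * Real.sqrt (Λᵀ * Λ).det *
        ∫ w, w ^ (-(d : ℝ) / 2) ∂μ) :
    ∀ x : Fin d → ℝ,
      (ρ / h0) * (∫ w, Real.exp (-(2 * π ^ 2 * w * (x ⬝ᵥ ((Λᵀ * Λ)⁻¹ *ᵥ x)))) ∂μ) =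
        ρ * (Real.Gamma (ν + d / 2) / Real.Gamma ν) * (2 * Real.sqrt π * α) ^ d *
          (1 + 4 * π ^ 2 * α ^ 2 * (Λᵀ * Λ).det ^ ((1 : ℝ) / d) *
            (x ⬝ᵥ ((Λᵀ * Λ)⁻¹ *ᵥ x))) ^ (-(ν + (d : ℝ) / 2)) := by
  have hd0 : (0:ℝ) < (d:ℝ) := by exact_mod_cast Nat.lt_of_lt_of_le Nat.zero_lt_one hd
  have hPD : (Λᵀ * Λ).PosDef := posdef_aux p d Λ hΛ
  have hD : 0 < (Λᵀ * Λ).det := hPD.det_pos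
  set D : ℝ := (Λᵀ * Λ).det with hD_def
  have hL : 0 < D ^ ((1:ℝ)/d) := Real.rpow_pos_of_pos hD _
  have hβpos : 0 < β := by rw [hβ]; positivity
  set a : ℝ := ν + (d:ℝ)/2 with ha_def
  have ha : 0 < a := by
    have : (0:ℝ) ≤ (d:ℝ)/2 := by positivity
    rw [ha_def]; linarith
  have hΓa : 0 < Real.Gamma a := Real.Gamma_pos_of_pos ha
  have hΓν : 0 < Real.Gamma ν := Real.Gamma_pos_of_pos hν
  -- moment integral
  have hM : ∫ w, w ^ (-(d:ℝ)/2) ∂μ = β ^ ((d:ℝ)/2) * (Real.Gamma ν / Real.Gamma a) := by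
    rw [hμ]
    have has : 0 < a + (-(d:ℝ)/2) := by rw [ha_def]; linarith
    have h := gamma_moment a β (-(d:ℝ)/2) 0 ha hβpos has le_rfl
    simp only [zero_mul, neg_zero, Real.exp_zero, mul_one, add_zero] at h
    rw [h, show a + (-(d:ℝ)/2) = ν by rw [ha_def]; ring,
      show a = ν + (d:ℝ)/2 from ha_def, Real.rpow_add hβpos]
    field_simp
  -- positivity setup
  set P : ℝ := (2 * Real.sqrt π * α) ^ d with hP_def
  have hsπ : (0:ℝ) ≤ 2 * Real.sqrt π * α := by positivity
  have hPpos : 0 < P := by rw [hP_def]; positivity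
  -- the key normalization identity
  have h1 : Real.sqrt D = (D ^ ((1:ℝ)/d)) ^ ((d:ℝ)/2) := by
    rw [Real.sqrt_eq_rpow, ← Real.rpow_mul hD.le,
      show (1:ℝ)/(d:ℝ) * ((d:ℝ)/2) = 1/2 by field_simp]
  have hK : (0:ℝ) < 2 * D ^ ((1:ℝ)/d) * α ^ 2 := by positivity
  have h2 : β ^ ((d:ℝ)/2) = (2 * D ^ ((1:ℝ)/d) * α ^ 2) ^ (-((d:ℝ)/2)) := by
    rw [hβ, one_div, Real.inv_rpow hK.le, ← Real.rpow_neg hK.le]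
  have h3 : P = (4 * π * α ^ 2) ^ ((d:ℝ)/2) := by
    have hb2 : ((2 * Real.sqrt π * α) ^ (2:ℕ) : ℝ) = 4 * π * α ^ 2 := by
      rw [mul_pow, mul_pow, Real.sq_sqrt pi_pos.le]; ring
    calc P = (2 * Real.sqrt π * α) ^ ((d:ℝ)) := (Real.rpow_natCast _ d).symm
    _ = ((2 * Real.sqrt π * α) ^ (((2:ℕ):ℝ))) ^ ((d:ℝ)/2) := by
        rw [← Real.rpow_mul hsπ]
        congr 1
        push_cast
        ring
    _ = (4 * π * α ^ 2) ^ ((d:ℝ)/2) := by rw [Real.rpow_natCast, hb2]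
  have key : (2 * π) ^ (-(d:ℝ)/2) * Real.sqrt D * β ^ ((d:ℝ)/2) * P = 1 := by
    have hcomb : (D ^ ((1:ℝ)/d)) ^ ((d:ℝ)/2) * (4 * π * α ^ 2) ^ ((d:ℝ)/2)
        = (2 * π) ^ ((d:ℝ)/2) * (2 * D ^ ((1:ℝ)/d) * α ^ 2) ^ ((d:ℝ)/2) := by
      rw [← Real.mul_rpow hL.le (by positivity), ← Real.mul_rpow (by positivity) hK.le]
      congr 1
      ring
    have h2πe : (0:ℝ) < (2 * π) ^ ((d:ℝ)/2) := Real.rpow_pos_of_pos (by positivity) _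
    have hKe : (0:ℝ) < (2 * D ^ ((1:ℝ)/d) * α ^ 2) ^ ((d:ℝ)/2) := Real.rpow_pos_of_pos hK _
    rw [h1, h2, h3, show -(d:ℝ)/2 = -((d:ℝ)/2) from neg_div _ _,
      Real.rpow_neg (by positivity : (0:ℝ) ≤ 2*π), Real.rpow_neg hK.le]
    field_simp
    ring_nf
    ring_nf at hcomb
    linear_combination hcomb
  have hAval : (2 * π) ^ (-(d:ℝ)/2) * Real.sqrt D * β ^ ((d:ℝ)/2) = 1 / P := by
    rw [eq_div_iff hPpos.ne']; exact key
  have hh0' : h0 = Real.Gamma ν / (Real.Gamma a * P) := by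
    rw [hh0, hM, show (2*π) ^ (-(d:ℝ)/2) * Real.sqrt D *
        (β ^ ((d:ℝ)/2) * (Real.Gamma ν / Real.Gamma a))
      = ((2*π) ^ (-(d:ℝ)/2) * Real.sqrt D * β ^ ((d:ℝ)/2)) * (Real.Gamma ν / Real.Gamma a)
        from by ring, hAval]
    field_simp
  intro x
  have hq0 : 0 ≤ x ⬝ᵥ ((Λᵀ * Λ)⁻¹ *ᵥ x) := by
    have h := hPD.inv.posSemidef.dotProduct_mulVec_nonneg x
    simpa using h
  set q : ℝ := x ⬝ᵥ ((Λᵀ * Λ)⁻¹ *ᵥ x) with hq_def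
  set c : ℝ := 2 * π ^ 2 * q with hc_def
  have hc : 0 ≤ c := by rw [hc_def]; exact mul_nonneg (by positivity) hq0
  have hT : (0:ℝ) < 1 + 4 * π ^ 2 * α ^ 2 * D ^ ((1:ℝ)/d) * q := by
    have : 0 ≤ 4 * π ^ 2 * α ^ 2 * D ^ ((1:ℝ)/d) * q :=
      mul_nonneg (by positivity) hq0
    linarith
  have hE : ∫ w, Real.exp (-(2 * π ^ 2 * w * q)) ∂μ
      = (1 + 4 * π ^ 2 * α ^ 2 * D ^ ((1:ℝ)/d) * q) ^ (-a) := by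
    rw [hμ]
    have h := gamma_moment a β 0 c ha hβpos (by simpa using ha) hc
    simp only [add_zero] at h
    have hcongr : ∫ w, Real.exp (-(2 * π ^ 2 * w * q)) ∂(gammaMeasure a β)
        = ∫ w, w ^ (0:ℝ) * Real.exp (-(c * w)) ∂(gammaMeasure a β) := by
      refine integral_congr_ae (Filter.Eventually.of_forall fun w => ?_)
      show Real.exp (-(2 * π ^ 2 * w * q)) = w ^ (0:ℝ) * Real.exp (-(c * w))
      rw [Real.rpow_zero, one_mul, hc_def]
      ring_nf
    rw [hcongr, h]
    have hβc : β + c = β * (1 + 4 * π ^ 2 * α ^ 2 * D ^ ((1:ℝ)/d) * q) := by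
      rw [hβ, hc_def]
      field_simp
      ring
    rw [hβc, Real.mul_rpow hβpos.le hT.le, Real.rpow_neg hT.le]
    have hβa : (0:ℝ) < β ^ a := Real.rpow_pos_of_pos hβpos a
    have hTa : (0:ℝ) < (1 + 4 * π ^ 2 * α ^ 2 * D ^ ((1:ℝ)/d) * q) ^ a :=
      Real.rpow_pos_of_pos hT a
    field_simp
  rw [hE, hh0', div_div_eq_mul_div]
  have hfin : ρ * (Real.Gamma a * P) / Real.Gamma ν = ρ * (Real.Gamma a / Real.Gamma ν) * P := by
    field_simp
  rw [hfin]
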